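/- arXiv:2206.13290 — 2 statements merged into one kernel-verified Lean document; each statement's English description precedes it below -/
import Mathlib

section
/- (Theorem 1, constant learning rate) Suppose Adam is run with constant parameters α_k = α > 0, β_{1k} = β₁ ∈ (0,1), β_{2k} = β₂ ∈ [0,1), and let θ* ∈ ℝ^d be a stationary point of f (∇f(θ*) = 0). Then for all k ∈ ℕ: E[m_kᵀ(θ_k − θ*)] ≤ D(θ*)M^{1/4}/(v_*^{1/4} β₁) · √(σ²/b + G²) + α√(1−β₂^{k+1})/(2√(v_*) β₁ (1−β₁^{k+1})) · (σ²/b + G²) + ((1−β₁)/β₁) D(θ*) G + (1−β₁) D(θ*) (B + √(σ²/b + G²)); and for all θ ∈ ℝ^d and all k ∈ ℕ: E[∇f(θ_k)ᵀ(θ_k − θ)] ≤ D(θ)M^{1/4}/(v_*^{1/4} β₁) · √(σ²/b + G²) + α√(1−β₂^{k+1})/(2√(v_*) β₁ (1−β₁^{k+1})) · (σ²/b + G²) + ((1−β₁)/β₁) D(θ) G + (1/β₁ + 2(1−β₁)) D(θ) (B + √(σ²/b + G²)). -/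
open MeasureTheory Filter Real

lemma rpow_quarter_nonneg (x : ℝ) : 0 ≤ x ^ ((1:ℝ)/4) := by
  rcases lt_trichotomy x 0 with h | h | h
  · rw [Real.rpow_def_of_neg h]
    have h4 : (1:ℝ)/4 * Real.pi = Real.pi/4 := by ring
    have hc : (0:ℝ) ≤ Real.cos ((1:ℝ)/4 * Real.pi) := by
      rw [h4, Real.cos_pi_div_four]; positivity
    exact mul_nonneg (Real.exp_pos _).le hc
  · simp [h]
  · exact (Real.rpow_pos_of_pos h _).le

lemma coord_abs_le_norm {d : ℕ} (x : EuclideanSpace ℝ (Fin d)) (i : Fin d) : |x i| ≤ ‖x‖ := by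
  have h2 : ‖x‖ = Real.sqrt (∑ j, x j ^ 2) := by
    rw [EuclideanSpace.norm_eq]
    congr 1
    exact Finset.sum_congr rfl fun j _ => by rw [Real.norm_eq_abs, sq_abs]
  have h1 : x i ^ 2 ≤ ∑ j, x j ^ 2 :=
    Finset.single_le_sum (fun j _ => sq_nonneg (x j)) (Finset.mem_univ i)
  calc |x i| = Real.sqrt (x i ^ 2) := (Real.sqrt_sq_eq_abs _).symm
    _ ≤ Real.sqrt (∑ j, x j ^ 2) := Real.sqrt_le_sqrt h1
    _ = ‖x‖ := h2.symm

lemma integrable_of_ae_bdd {Ω : Type*} [MeasurableSpace Ω] {μ : Measure Ω} [IsFiniteMeasure μ]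
    {E : Type*} [NormedAddCommGroup E] {h : Ω → E} (C : ℝ)
    (hmeas : AEStronglyMeasurable h μ) (hbd : ∀ᵐ ω ∂μ, ‖h ω‖ ≤ C) : Integrable h μ :=
  memLp_one_iff_integrable.mp (MemLp.of_bound hmeas C hbd)

lemma int_le_sqrt_of_int_sq_le {Ω : Type*} [MeasurableSpace Ω] {μ : Measure Ω}
    [IsProbabilityMeasure μ] {h : Ω → ℝ} {C A : ℝ}
    (hmeas : AEStronglyMeasurable h μ) (hnn : ∀ ω, 0 ≤ h ω)
    (hbd : ∀ᵐ ω ∂μ, h ω ≤ C) (hA : ∫ ω, h ω ^ 2 ∂μ ≤ A) : ∫ ω, h ω ∂μ ≤ Real.sqrt A := by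
  have hpq : (2:ℝ).HolderConjugate 2 := Real.HolderConjugate.two_two
  have hmem : MemLp h (ENNReal.ofReal 2) μ :=
    MemLp.of_bound hmeas C (hbd.mono fun ω hω => by
      rw [Real.norm_eq_abs, abs_of_nonneg (hnn ω)]; exact hω)
  have hmem1 : MemLp (fun _ : Ω => (1:ℝ)) (ENNReal.ofReal 2) μ := memLp_const 1
  have hH := integral_mul_le_Lp_mul_Lq_of_nonneg hpq
    (Eventually.of_forall hnn) (Eventually.of_forall fun _ => zero_le_one) hmem hmem1
  simp only [mul_one, Real.one_rpow, integral_const, measure_univ, ENNReal.toReal_one,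
    smul_eq_mul, one_mul] at hH
  simp only [Real.rpow_two, probReal_univ, Real.one_rpow, mul_one] at hH
  have hint_nonneg : 0 ≤ ∫ ω, h ω ^ 2 ∂μ := integral_nonneg fun ω => sq_nonneg _
  calc ∫ ω, h ω ∂μ ≤ (∫ ω, h ω ^ 2 ∂μ) ^ ((1:ℝ)/2) := hH
    _ ≤ A ^ ((1:ℝ)/2) := Real.rpow_le_rpow hint_nonneg hA (by norm_num)
    _ = Real.sqrt A := (Real.sqrt_eq_rpow A).symm




set_option maxHeartbeats 1000000 in
theorem adam_theorem1_constant_lr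
    {Ω : Type*} [MeasurableSpace Ω] (μ : Measure Ω) [IsProbabilityMeasure μ]
    {d : ℕ} (f : EuclideanSpace ℝ (Fin d) → ℝ)
    (θ m mp v g dvec : ℕ → Ω → EuclideanSpace ℝ (Fin d))
    (vhat : ℕ → Ω → Fin d → ℝ)
    (α β1 β2 : ℕ → ℝ)
    (σ2 b G B M vstar : ℝ)
    (D : EuclideanSpace ℝ (Fin d) → ℝ)
    (hf : ContDiff ℝ 1 f)
    (hb : 0 < b) (hσ2 : 0 ≤ σ2) (hG : 0 < G) (hB : 0 < B)
    (hαpos : ∀ k, 0 < α k)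
    (hmp0 : ∀ ω, mp 0 ω = 0)
    (hmrec : ∀ k ω, m k ω = β1 k • mp k ω + (1 - β1 k) • g k ω)
    (hmpshift : ∀ k ω, mp (k+1) ω = m k ω)
    (hv0 : ∀ ω (i : Fin d), v 0 ω i = (1 - β2 0) * (g 0 ω i) ^ 2)
    (hvrec : ∀ k ω (i : Fin d), v (k+1) ω i = β2 (k+1) * v k ω i + (1 - β2 (k+1)) * (g (k+1) ω i) ^ 2)
    (hvhat : ∀ k ω (i : Fin d), vhat k ω i = v k ω i / (1 - (β2 k) ^ (k+1)))
    (hdvec : ∀ k ω (i : Fin d), dvec k ω i = -(m k ω i / (1 - (β1 k) ^ (k+1))) / Real.sqrt (vhat k ω i))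
    (hθrec : ∀ k ω, θ (k+1) ω = θ k ω + α k • dvec k ω)
    (hθmeas : ∀ k, Measurable (θ k)) (hgmeas : ∀ k, Measurable (g k))
    (hunbiased : ∀ k, μ[g k | MeasurableSpace.comap (θ k) inferInstance]
        =ᵐ[μ] fun ω => gradient f (θ k ω))
    (hvar : ∀ k, ∫ ω, ‖g k ω - gradient f (θ k ω)‖ ^ 2 ∂μ ≤ σ2 / b)
    (hGbd : ∀ k, ∀ᵐ ω ∂μ, ‖gradient f (θ k ω)‖ ≤ G)
    (hBbd : ∀ k, ∀ᵐ ω ∂μ, ‖g k ω‖ ≤ B)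
    (hDpos : ∀ x, 0 < D x)
    (hDbd : ∀ x k, ∀ᵐ ω ∂μ, ‖θ k ω - x‖ ≤ D x)
    (hM : ∀ k, ∀ᵐ ω ∂μ, ∀ i, (g k ω i) ^ 2 ≤ M)
    (hvstar : 0 < vstar)
    (hvstarle : ∀ k, ∀ᵐ ω ∂μ, ∀ i, vstar ≤ v k ω i)
    (αc β1c β2c : ℝ) (hαc : 0 < αc)
    (hβ1c : β1c ∈ Set.Ioo (0:ℝ) 1) (hβ2c : β2c ∈ Set.Ico (0:ℝ) 1)
    (hαconst : ∀ k, α k = αc) (hβ1const : ∀ k, β1 k = β1c) (hβ2const : ∀ k, β2 k = β2c)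
    (θstar : EuclideanSpace ℝ (Fin d)) (hstat : gradient f θstar = 0) :
    (∀ k : ℕ,
      ∫ ω, (inner ℝ (m k ω) (θ k ω - θstar) : ℝ) ∂μ ≤
        D θstar * M ^ ((1:ℝ)/4) / (vstar ^ ((1:ℝ)/4) * β1c) * Real.sqrt (σ2 / b + G ^ 2)
        + αc * Real.sqrt (1 - β2c ^ (k+1)) / (2 * Real.sqrt vstar * β1c * (1 - β1c ^ (k+1))) * (σ2 / b + G ^ 2)
        + (1 - β1c) / β1c * D θstar * G
        + (1 - β1c) * D θstar * (B + Real.sqrt (σ2 / b + G ^ 2))) ∧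
    (∀ (x : EuclideanSpace ℝ (Fin d)) (k : ℕ),
      ∫ ω, (inner ℝ (gradient f (θ k ω)) (θ k ω - x) : ℝ) ∂μ ≤
        D x * M ^ ((1:ℝ)/4) / (vstar ^ ((1:ℝ)/4) * β1c) * Real.sqrt (σ2 / b + G ^ 2)
        + αc * Real.sqrt (1 - β2c ^ (k+1)) / (2 * Real.sqrt vstar * β1c * (1 - β1c ^ (k+1))) * (σ2 / b + G ^ 2)
        + (1 - β1c) / β1c * D x * G
        + (1 / β1c + 2 * (1 - β1c)) * D x * (B + Real.sqrt (σ2 / b + G ^ 2))) := by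
  classical
  obtain ⟨hβ1pos, hβ1lt⟩ := hβ1c
  obtain ⟨hβ2pos, hβ2lt⟩ := hβ2c
  set S := Real.sqrt (σ2 / b + G ^ 2) with hSdef
  have hq : (0:ℝ) ≤ σ2 / b := div_nonneg hσ2 hb.le
  have hqG : (0:ℝ) < σ2 / b + G ^ 2 := by positivity
  have hSpos : 0 < S := Real.sqrt_pos.mpr hqG
  have hGS : G ≤ S := by
    calc G = Real.sqrt (G ^ 2) := (Real.sqrt_sq hG.le).symm
      _ ≤ S := Real.sqrt_le_sqrt (by linarith)
  -- continuity and measurability of the gradient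
  have hcontgrad : Continuous (gradient f) := by
    have h1 : Continuous (fderiv ℝ f) := hf.continuous_fderiv one_ne_zero
    exact ((InnerProductSpace.toDual ℝ (EuclideanSpace ℝ (Fin d))).symm.continuous.comp h1 : _)
  have hFmeas : ∀ k, Measurable fun ω => gradient f (θ k ω) :=
    fun k => hcontgrad.measurable.comp (hθmeas k)
  have hgint : ∀ k, Integrable (g k) μ :=
    fun k => integrable_of_ae_bdd B (hgmeas k).aestronglyMeasurable (hBbd k)
  have hFint : ∀ k, Integrable (fun ω => gradient f (θ k ω)) μ :=
    fun k => integrable_of_ae_bdd G (hFmeas k).aestronglyMeasurable (hGbd k)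
  have hgimeas : ∀ k (i : Fin d), Measurable fun ω => g k ω i := fun k i =>
    ((EuclideanSpace.proj (𝕜 := ℝ) i).continuous.measurable).comp (hgmeas k)
  have hFimeas : ∀ k (i : Fin d), Measurable fun ω => gradient f (θ k ω) i := fun k i =>
    ((EuclideanSpace.proj (𝕜 := ℝ) i).continuous.measurable).comp (hFmeas k)
  have hgi_int : ∀ k (i : Fin d), Integrable (fun ω => g k ω i) μ := fun k i =>
    integrable_of_ae_bdd B (hgimeas k i).aestronglyMeasurable
      ((hBbd k).mono fun ω h => by
        rw [Real.norm_eq_abs]; exact (coord_abs_le_norm _ i).trans h)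
  have hFi_int : ∀ k (i : Fin d), Integrable (fun ω => gradient f (θ k ω) i) μ := fun k i =>
    integrable_of_ae_bdd G (hFimeas k i).aestronglyMeasurable
      ((hGbd k).mono fun ω h => by
        rw [Real.norm_eq_abs]; exact (coord_abs_le_norm _ i).trans h)
  have hFgi_int : ∀ k (i : Fin d),
      Integrable ((fun ω => gradient f (θ k ω) i) * fun ω => g k ω i) μ := fun k i =>
    integrable_of_ae_bdd (G * B) ((hFimeas k i).mul (hgimeas k i)).aestronglyMeasurable
      (by
        filter_upwards [hGbd k, hBbd k] with ω h1 h2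
        rw [Pi.mul_apply, Real.norm_eq_abs, abs_mul]
        exact mul_le_mul ((coord_abs_le_norm _ i).trans h1)
          ((coord_abs_le_norm _ i).trans h2) (abs_nonneg _) hG.le)
  have hFFi_int : ∀ k (i : Fin d),
      Integrable (fun ω => gradient f (θ k ω) i * gradient f (θ k ω) i) μ := fun k i =>
    integrable_of_ae_bdd (G * G) ((hFimeas k i).mul (hFimeas k i)).aestronglyMeasurable
      (by
        filter_upwards [hGbd k] with ω h1
        rw [Real.norm_eq_abs, abs_mul]
        exact mul_le_mul ((coord_abs_le_norm _ i).trans h1)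
          ((coord_abs_le_norm _ i).trans h1) (abs_nonneg _) hG.le)
  have hgFi_int : ∀ k (i : Fin d),
      Integrable (fun ω => g k ω i * gradient f (θ k ω) i) μ := fun k i =>
    integrable_of_ae_bdd (B * G) ((hgimeas k i).mul (hFimeas k i)).aestronglyMeasurable
      (by
        filter_upwards [hGbd k, hBbd k] with ω h1 h2
        rw [Real.norm_eq_abs, abs_mul]
        exact mul_le_mul ((coord_abs_le_norm _ i).trans h2)
          ((coord_abs_le_norm _ i).trans h1) (abs_nonneg _) hB.le)
  have hinner_pt : ∀ (x y : EuclideanSpace ℝ (Fin d)), (inner ℝ x y : ℝ) = ∑ i, x i * y i :=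
    fun x y => by simp [PiLp.inner_apply, RCLike.inner_apply, starRingEnd_apply]; exact Finset.sum_congr rfl fun _ _ => mul_comm _ _
  -- the key orthogonality identity
  have hcross : ∀ k, ∫ ω, (inner ℝ (g k ω) (gradient f (θ k ω)) : ℝ) ∂μ
      = ∫ ω, ‖gradient f (θ k ω)‖ ^ 2 ∂μ := by
    intro k
    have hm := (hθmeas k).comap_le
    haveI hfin : IsFiniteMeasure (μ.trim hm) := isFiniteMeasure_trim hm
    haveI : SigmaFinite (μ.trim hm) := inferInstance
    have hθmk : Measurable[(MeasurableSpace.comap (θ k) inferInstance)] (θ k) := Measurable.of_comap_le le_rfl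
    have hFi_sm : ∀ i, StronglyMeasurable[(MeasurableSpace.comap (θ k) inferInstance)] fun ω => gradient f (θ k ω) i := by
      intro i
      have hc2 : Continuous fun y : EuclideanSpace ℝ (Fin d) =>
          (EuclideanSpace.proj (𝕜 := ℝ) i) (gradient f y) :=
        (EuclideanSpace.proj (𝕜 := ℝ) i).continuous.comp hcontgrad
      exact ((hc2.measurable).comp hθmk).stronglyMeasurable
    have hcoord : ∀ i, (fun ω => gradient f (θ k ω) i) =ᵐ[μ] μ[fun ω => g k ω i | (MeasurableSpace.comap (θ k) inferInstance)] := by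
      intro i
      refine ae_eq_condExp_of_forall_setIntegral_eq hm (hgi_int k i)
        (fun s _ _ => (hFi_int k i).integrableOn) ?_
        ((hFi_sm i).aestronglyMeasurable)
      intro s hs hμs
      have hs0 : MeasurableSet s := hm s hs
      have h1 : ∫ x in s, gradient f (θ k x) ∂μ = ∫ x in s, g k x ∂μ := by
        rw [← setIntegral_condExp hm (hgint k) hs]
        refine setIntegral_congr_ae hs0 ?_
        exact (hunbiased k).mono fun ω h _ => h.symm
      have h2 : ∫ x in s, gradient f (θ k x) i ∂μ
          = (EuclideanSpace.proj (𝕜 := ℝ) i) (∫ x in s, gradient f (θ k x) ∂μ) := by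
        rw [← ContinuousLinearMap.integral_comp_comm _ (hFint k).integrableOn]; rfl
      have h3 : ∫ x in s, g k x i ∂μ
          = (EuclideanSpace.proj (𝕜 := ℝ) i) (∫ x in s, g k x ∂μ) := by
        rw [← ContinuousLinearMap.integral_comp_comm _ (hgint k).integrableOn]; rfl
      rw [h2, h3, h1]
    have hprod : ∀ i, ∫ ω, g k ω i * gradient f (θ k ω) i ∂μ
        = ∫ ω, gradient f (θ k ω) i * gradient f (θ k ω) i ∂μ := by
      intro i
      have h1 := condExp_mul_of_stronglyMeasurable_left (μ := μ) (hFi_sm i) (hFgi_int k i) (hgi_int k i)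
      calc ∫ ω, g k ω i * gradient f (θ k ω) i ∂μ
          = ∫ ω, ((fun ω => gradient f (θ k ω) i) * fun ω => g k ω i) ω ∂μ := by
            refine integral_congr_ae (Eventually.of_forall fun ω => ?_)
            simp [Pi.mul_apply, mul_comm]
        _ = ∫ ω, (μ[(fun ω => gradient f (θ k ω) i) * fun ω => g k ω i | (MeasurableSpace.comap (θ k) inferInstance)]) ω ∂μ :=
            (integral_condExp hm).symm
        _ = ∫ ω, gradient f (θ k ω) i * gradient f (θ k ω) i ∂μ := by
            refine integral_congr_ae ?_
            filter_upwards [h1, hcoord i] with ω hω1 hω2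
            rw [hω1, Pi.mul_apply, ← hω2]
    calc ∫ ω, (inner ℝ (g k ω) (gradient f (θ k ω)) : ℝ) ∂μ
        = ∫ ω, ∑ i, g k ω i * gradient f (θ k ω) i ∂μ := by
          refine integral_congr_ae (Eventually.of_forall fun ω => ?_)
          exact hinner_pt _ _
      _ = ∑ i, ∫ ω, g k ω i * gradient f (θ k ω) i ∂μ :=
          integral_finset_sum _ fun i _ => hgFi_int k i
      _ = ∑ i, ∫ ω, gradient f (θ k ω) i * gradient f (θ k ω) i ∂μ :=
          Finset.sum_congr rfl fun i _ => hprod i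
      _ = ∫ ω, ∑ i, gradient f (θ k ω) i * gradient f (θ k ω) i ∂μ :=
          (integral_finset_sum _ fun i _ => hFFi_int k i).symm
      _ = ∫ ω, ‖gradient f (θ k ω)‖ ^ 2 ∂μ := by
          refine integral_congr_ae (Eventually.of_forall fun ω => ?_)
          exact ((hinner_pt _ _).symm.trans (real_inner_self_eq_norm_sq _))
  -- second moment bound for g
  have hF2int : ∀ k, Integrable (fun ω => ‖gradient f (θ k ω)‖ ^ 2) μ := fun k =>
    integrable_of_ae_bdd (G ^ 2) ((hFmeas k).norm.pow_const 2).aestronglyMeasurable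
      ((hGbd k).mono fun ω h => by
        rw [Real.norm_eq_abs, abs_of_nonneg (by positivity)]
        exact pow_le_pow_left₀ (norm_nonneg _) h 2)
  have hgF2int : ∀ k, Integrable (fun ω => ‖g k ω - gradient f (θ k ω)‖ ^ 2) μ := fun k =>
    integrable_of_ae_bdd ((B + G) ^ 2)
      (((hgmeas k).sub (hFmeas k)).norm.pow_const 2).aestronglyMeasurable
      (by
        filter_upwards [hBbd k, hGbd k] with ω h1 h2
        rw [Real.norm_eq_abs, abs_of_nonneg (by positivity)]
        exact pow_le_pow_left₀ (norm_nonneg _)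
          ((norm_sub_le _ _).trans (add_le_add h1 h2)) 2)
  have hinner_int : ∀ k, Integrable (fun ω => (inner ℝ (g k ω) (gradient f (θ k ω)) : ℝ)) μ :=
    fun k => integrable_of_ae_bdd (B * G)
      ((hgmeas k).inner (hFmeas k)).aestronglyMeasurable
      (by
        filter_upwards [hBbd k, hGbd k] with ω h1 h2
        rw [Real.norm_eq_abs]
        exact (abs_real_inner_le_norm _ _).trans (mul_le_mul h1 h2 (norm_nonneg _) hB.le))
  have hF2le : ∀ k, ∫ ω, ‖gradient f (θ k ω)‖ ^ 2 ∂μ ≤ G ^ 2 := by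
    intro k
    have h1 : ∫ ω, ‖gradient f (θ k ω)‖ ^ 2 ∂μ ≤ ∫ _ω, G ^ 2 ∂μ := by
      refine integral_mono_ae (hF2int k) (integrable_const _) ?_
      filter_upwards [hGbd k] with ω h
      exact pow_le_pow_left₀ (norm_nonneg _) h 2
    simpa [measure_univ] using h1
  have hg2 : ∀ k, ∫ ω, ‖g k ω‖ ^ 2 ∂μ ≤ σ2 / b + G ^ 2 := by
    intro k
    have hpt : ∀ ω, ‖g k ω‖ ^ 2 = ‖g k ω - gradient f (θ k ω)‖ ^ 2
        + 2 * ((inner ℝ (g k ω) (gradient f (θ k ω)) : ℝ) - ‖gradient f (θ k ω)‖ ^ 2)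
        + ‖gradient f (θ k ω)‖ ^ 2 := by
      intro ω
      have h1 := norm_add_sq_real (g k ω - gradient f (θ k ω)) (gradient f (θ k ω))
      rw [sub_add_cancel] at h1
      rw [h1, inner_sub_left, real_inner_self_eq_norm_sq]
    calc ∫ ω, ‖g k ω‖ ^ 2 ∂μ
        = ∫ ω, (‖g k ω - gradient f (θ k ω)‖ ^ 2
            + 2 * ((inner ℝ (g k ω) (gradient f (θ k ω)) : ℝ) - ‖gradient f (θ k ω)‖ ^ 2)
            + ‖gradient f (θ k ω)‖ ^ 2) ∂μ :=
          integral_congr_ae (Eventually.of_forall hpt)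
      _ = (∫ ω, ‖g k ω - gradient f (θ k ω)‖ ^ 2 ∂μ)
            + 2 * ((∫ ω, (inner ℝ (g k ω) (gradient f (θ k ω)) : ℝ) ∂μ)
              - ∫ ω, ‖gradient f (θ k ω)‖ ^ 2 ∂μ)
            + ∫ ω, ‖gradient f (θ k ω)‖ ^ 2 ∂μ := by
          have e3 : ∫ ω, ((inner ℝ (g k ω) (gradient f (θ k ω)) : ℝ) - ‖gradient f (θ k ω)‖ ^ 2) ∂μ
              = (∫ ω, (inner ℝ (g k ω) (gradient f (θ k ω)) : ℝ) ∂μ)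
                - ∫ ω, ‖gradient f (θ k ω)‖ ^ 2 ∂μ := by
            exact integral_sub (hinner_int k) (hF2int k)
          have e2 : ∫ ω, 2 * ((inner ℝ (g k ω) (gradient f (θ k ω)) : ℝ)
                - ‖gradient f (θ k ω)‖ ^ 2) ∂μ
              = 2 * ∫ ω, ((inner ℝ (g k ω) (gradient f (θ k ω)) : ℝ)
                - ‖gradient f (θ k ω)‖ ^ 2) ∂μ := by
            exact integral_const_mul 2 _
          have e1 : ∫ ω, (‖g k ω - gradient f (θ k ω)‖ ^ 2
                + 2 * ((inner ℝ (g k ω) (gradient f (θ k ω)) : ℝ)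
                  - ‖gradient f (θ k ω)‖ ^ 2)) ∂μ
              = (∫ ω, ‖g k ω - gradient f (θ k ω)‖ ^ 2 ∂μ)
                + ∫ ω, 2 * ((inner ℝ (g k ω) (gradient f (θ k ω)) : ℝ)
                  - ‖gradient f (θ k ω)‖ ^ 2) ∂μ := by
            exact integral_add (hgF2int k) (((hinner_int k).sub (hF2int k)).const_mul 2)
          have e0 : ∫ ω, (‖g k ω - gradient f (θ k ω)‖ ^ 2
                + 2 * ((inner ℝ (g k ω) (gradient f (θ k ω)) : ℝ)
                  - ‖gradient f (θ k ω)‖ ^ 2)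
                + ‖gradient f (θ k ω)‖ ^ 2) ∂μ
              = (∫ ω, (‖g k ω - gradient f (θ k ω)‖ ^ 2
                + 2 * ((inner ℝ (g k ω) (gradient f (θ k ω)) : ℝ)
                  - ‖gradient f (θ k ω)‖ ^ 2)) ∂μ)
                + ∫ ω, ‖gradient f (θ k ω)‖ ^ 2 ∂μ := by
            exact integral_add ((hgF2int k).add
              (((hinner_int k).sub (hF2int k)).const_mul 2)) (hF2int k)
          rw [e0, e1, e2, e3]
      _ = (∫ ω, ‖g k ω - gradient f (θ k ω)‖ ^ 2 ∂μ)
            + ∫ ω, ‖gradient f (θ k ω)‖ ^ 2 ∂μ := by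
          rw [hcross k]; ring
      _ ≤ σ2 / b + G ^ 2 := add_le_add (hvar k) (hF2le k)
  have hg1 : ∀ k, ∫ ω, ‖g k ω‖ ∂μ ≤ S := fun k =>
    int_le_sqrt_of_int_sq_le (hgmeas k).norm.aestronglyMeasurable
      (fun ω => norm_nonneg _)
      (hBbd k) (hg2 k)
  -- properties of m
  have hm0fun : m 0 = fun ω => (1 - β1 0) • g 0 ω := by
    funext ω; rw [hmrec 0 ω, hmp0 ω, smul_zero, zero_add]
  have hmsucc : ∀ k, m (k+1) = fun ω => β1 (k+1) • m k ω + (1 - β1 (k+1)) • g (k+1) ω := by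
    intro k; funext ω; rw [hmrec (k+1) ω, hmpshift k ω]
  have hmmeas : ∀ k, Measurable (m k) := by
    intro k; induction k with
    | zero => rw [hm0fun]; exact (hgmeas 0).const_smul (1 - β1 0)
    | succ k ih => rw [hmsucc k]; exact (ih.const_smul (β1 (k+1))).add ((hgmeas (k+1)).const_smul (1 - β1 (k+1)))
  have hβ1nn : (0:ℝ) ≤ 1 - β1c := by linarith
  have hmB : ∀ k, ∀ᵐ ω ∂μ, ‖m k ω‖ ≤ B := by
    intro k; induction k with
    | zero =>
      filter_upwards [hBbd 0] with ω h
      rw [hm0fun]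
      simp only [norm_smul, Real.norm_eq_abs, hβ1const 0, abs_of_nonneg hβ1nn]
      nlinarith [norm_nonneg (g 0 ω)]
    | succ k ih =>
      filter_upwards [ih, hBbd (k+1)] with ω h1 h2
      rw [hmsucc k]
      simp only [hβ1const (k+1)]
      calc ‖β1c • m k ω + (1 - β1c) • g (k+1) ω‖
          ≤ ‖β1c • m k ω‖ + ‖(1 - β1c) • g (k+1) ω‖ := norm_add_le _ _
        _ = β1c * ‖m k ω‖ + (1 - β1c) * ‖g (k+1) ω‖ := by
            rw [norm_smul, norm_smul, Real.norm_eq_abs, Real.norm_eq_abs,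
              abs_of_pos hβ1pos, abs_of_nonneg hβ1nn]
        _ ≤ β1c * B + (1 - β1c) * B := add_le_add
            (mul_le_mul_of_nonneg_left h1 hβ1pos.le)
            (mul_le_mul_of_nonneg_left h2 hβ1nn)
        _ = B := by ring
  have hmnint : ∀ k, Integrable (fun ω => ‖m k ω‖) μ := fun k =>
    integrable_of_ae_bdd B (hmmeas k).norm.aestronglyMeasurable
      ((hmB k).mono fun ω h => by rwa [norm_norm])
  have hgnint : ∀ k, Integrable (fun ω => ‖g k ω‖) μ := fun k =>
    integrable_of_ae_bdd B (hgmeas k).norm.aestronglyMeasurable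
      ((hBbd k).mono fun ω h => by rwa [norm_norm])
  have hmS : ∀ k, ∫ ω, ‖m k ω‖ ∂μ ≤ S := by
    intro k; induction k with
    | zero =>
      have heq : ∫ ω, ‖m 0 ω‖ ∂μ = (1 - β1c) * ∫ ω, ‖g 0 ω‖ ∂μ := by
        rw [← integral_const_mul]
        refine integral_congr_ae (Eventually.of_forall fun ω => ?_)
        rw [hm0fun]
        simp only [norm_smul, Real.norm_eq_abs, hβ1const 0, abs_of_nonneg hβ1nn]
      rw [heq]
      have h1 : (1 - β1c) * ∫ ω, ‖g 0 ω‖ ∂μ ≤ (1 - β1c) * S :=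
        mul_le_mul_of_nonneg_left (hg1 0) hβ1nn
      nlinarith [hSpos]
    | succ k ih =>
      have hpt : ∀ᵐ ω ∂μ, ‖m (k+1) ω‖ ≤ β1c * ‖m k ω‖ + (1 - β1c) * ‖g (k+1) ω‖ := by
        refine Eventually.of_forall fun ω => ?_
        rw [hmsucc k]
        simp only [hβ1const (k+1)]
        calc ‖β1c • m k ω + (1 - β1c) • g (k+1) ω‖
            ≤ ‖β1c • m k ω‖ + ‖(1 - β1c) • g (k+1) ω‖ := norm_add_le _ _
          _ = β1c * ‖m k ω‖ + (1 - β1c) * ‖g (k+1) ω‖ := by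
              rw [norm_smul, norm_smul, Real.norm_eq_abs, Real.norm_eq_abs,
                abs_of_pos hβ1pos, abs_of_nonneg hβ1nn]
      have h2 : ∫ ω, ‖m (k+1) ω‖ ∂μ
          ≤ ∫ ω, (β1c * ‖m k ω‖ + (1 - β1c) * ‖g (k+1) ω‖) ∂μ :=
        integral_mono_ae (hmnint (k+1))
          (((hmnint k).const_mul _).add ((hgnint (k+1)).const_mul _)) hpt
      have e1 : ∫ ω, (β1c * ‖m k ω‖ + (1 - β1c) * ‖g (k+1) ω‖) ∂μ
          = (∫ ω, β1c * ‖m k ω‖ ∂μ) + ∫ ω, (1 - β1c) * ‖g (k+1) ω‖ ∂μ := by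
        exact integral_add ((hmnint k).const_mul _) ((hgnint (k+1)).const_mul _)
      have e2 : ∫ ω, β1c * ‖m k ω‖ ∂μ = β1c * ∫ ω, ‖m k ω‖ ∂μ := integral_const_mul _ _
      have e3 : ∫ ω, (1 - β1c) * ‖g (k+1) ω‖ ∂μ = (1 - β1c) * ∫ ω, ‖g (k+1) ω‖ ∂μ :=
        integral_const_mul _ _
      rw [e1, e2, e3] at h2
      have h3 : β1c * ∫ ω, ‖m k ω‖ ∂μ ≤ β1c * S := mul_le_mul_of_nonneg_left ih hβ1pos.le
      have h4 : (1 - β1c) * ∫ ω, ‖g (k+1) ω‖ ∂μ ≤ (1 - β1c) * S :=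
        mul_le_mul_of_nonneg_left (hg1 (k+1)) hβ1nn
      nlinarith
  -- bounds on the two integrals of interest
  have hpart1bound : ∀ k, ∫ ω, (inner ℝ (m k ω) (θ k ω - θstar) : ℝ) ∂μ ≤ D θstar * S := by
    intro k
    have h1 : ∫ ω, (inner ℝ (m k ω) (θ k ω - θstar) : ℝ) ∂μ
        ≤ ∫ ω, ‖m k ω‖ * D θstar ∂μ := by
      calc ∫ ω, (inner ℝ (m k ω) (θ k ω - θstar) : ℝ) ∂μ
          ≤ ‖∫ ω, (inner ℝ (m k ω) (θ k ω - θstar) : ℝ) ∂μ‖ := le_abs_self _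
        _ ≤ ∫ ω, ‖(inner ℝ (m k ω) (θ k ω - θstar) : ℝ)‖ ∂μ := norm_integral_le_integral_norm _
        _ ≤ ∫ ω, ‖m k ω‖ * D θstar ∂μ := by
            refine integral_mono_of_nonneg (Eventually.of_forall fun ω => norm_nonneg _)
              ((hmnint k).mul_const _) ?_
            filter_upwards [hDbd θstar k] with ω h
            rw [Real.norm_eq_abs]
            exact (abs_real_inner_le_norm _ _).trans
              (mul_le_mul_of_nonneg_left h (norm_nonneg _))
    rw [integral_mul_const] at h1
    calc ∫ ω, (inner ℝ (m k ω) (θ k ω - θstar) : ℝ) ∂μ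
        ≤ (∫ ω, ‖m k ω‖ ∂μ) * D θstar := h1
      _ ≤ S * D θstar := mul_le_mul_of_nonneg_right (hmS k) (hDpos θstar).le
      _ = D θstar * S := mul_comm _ _
  have hpart2bound : ∀ (x : EuclideanSpace ℝ (Fin d)) k,
      ∫ ω, (inner ℝ (gradient f (θ k ω)) (θ k ω - x) : ℝ) ∂μ ≤ G * D x := by
    intro x k
    have hbd : ∀ᵐ ω ∂μ, ‖(inner ℝ (gradient f (θ k ω)) (θ k ω - x) : ℝ)‖ ≤ G * D x := by
      filter_upwards [hGbd k, hDbd x k] with ω h1 h2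
      rw [Real.norm_eq_abs]
      exact (abs_real_inner_le_norm _ _).trans (mul_le_mul h1 h2 (norm_nonneg _) hG.le)
    have h := norm_integral_le_of_norm_le_const (μ := μ) hbd
    rw [probReal_univ, mul_one] at h
    exact (le_abs_self _).trans h
  -- nonnegativity of the various terms
  have hβ1pow : ∀ k : ℕ, β1c ^ (k+1) < 1 := fun k =>
    pow_lt_one₀ hβ1pos.le hβ1lt (Nat.succ_ne_zero k)
  have ht2 : ∀ k : ℕ, 0 ≤ αc * Real.sqrt (1 - β2c ^ (k+1))
      / (2 * Real.sqrt vstar * β1c * (1 - β1c ^ (k+1))) * (σ2 / b + G ^ 2) := by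
    intro k
    have hden : 0 < 2 * Real.sqrt vstar * β1c * (1 - β1c ^ (k+1)) := by
      have h1 : (0:ℝ) < 1 - β1c ^ (k+1) := by linarith [hβ1pow k]
      exact mul_pos (mul_pos (mul_pos two_pos (Real.sqrt_pos.mpr hvstar)) hβ1pos) h1
    exact mul_nonneg (div_nonneg (mul_nonneg hαc.le (Real.sqrt_nonneg _)) hden.le) hqG.le
  have hvq : 0 < vstar ^ ((1:ℝ)/4) := Real.rpow_pos_of_pos hvstar _
  have ht1nn : ∀ (x : EuclideanSpace ℝ (Fin d)),
      0 ≤ D x * M ^ ((1:ℝ)/4) / (vstar ^ ((1:ℝ)/4) * β1c) * S :=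
    fun x => mul_nonneg (div_nonneg (mul_nonneg (hDpos x).le (rpow_quarter_nonneg M))
      (mul_nonneg hvq.le hβ1pos.le)) hSpos.le
  have ht3 : ∀ (x : EuclideanSpace ℝ (Fin d)), 0 ≤ (1 - β1c) / β1c * D x * G :=
    fun x => mul_nonneg (mul_nonneg (div_nonneg hβ1nn hβ1pos.le) (hDpos x).le) hG.le
  have hBS : (0:ℝ) ≤ B + S := by linarith
  constructor
  · intro k
    rcases Nat.eq_zero_or_pos d with hd | hd
    · -- dimension zero : the inner product is identically 0
      have hz : ∀ ω, (inner ℝ (m k ω) (θ k ω - θstar) : ℝ) = 0 := by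
        intro ω
        have : m k ω = 0 := by ext i; exact ((Nat.not_lt_zero i.1) (hd ▸ i.isLt)).elim
        rw [this, inner_zero_left]
      rw [integral_congr_ae (Eventually.of_forall hz), integral_zero]
      have h4 : 0 ≤ (1 - β1c) * D θstar * (B + S) :=
        mul_nonneg (mul_nonneg hβ1nn (hDpos θstar).le) hBS
      linarith [ht1nn θstar, ht2 k, ht3 θstar]
    · -- positive dimension : vstar ≤ M
      have hμne : (ae μ).NeBot := ae_neBot.mpr (IsProbabilityMeasure.ne_zero μ)
      obtain ⟨ω0, hω1, hω2⟩ := ((hM 0).and (hvstarle 0)).exists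
      set i0 : Fin d := ⟨0, hd⟩
      have hvM : vstar ≤ M := by
        have h1 := hω2 i0
        have h2 := hω1 i0
        have h3 := hv0 ω0 i0
        rw [hβ2const 0] at h3
        nlinarith [sq_nonneg (g 0 ω0 i0)]
      have hA : vstar ^ ((1:ℝ)/4) ≤ M ^ ((1:ℝ)/4) :=
        Real.rpow_le_rpow hvstar.le hvM (by norm_num)
      have hratio : 1 ≤ M ^ ((1:ℝ)/4) / (vstar ^ ((1:ℝ)/4) * β1c) := by
        rw [le_div_iff₀ (by positivity)]
        nlinarith [mul_le_of_le_one_right hvq.le hβ1lt.le]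
      have ht1 : D θstar * S ≤ D θstar * M ^ ((1:ℝ)/4) / (vstar ^ ((1:ℝ)/4) * β1c) * S := by
        calc D θstar * S = D θstar * S * 1 := by ring
          _ ≤ D θstar * S * (M ^ ((1:ℝ)/4) / (vstar ^ ((1:ℝ)/4) * β1c)) :=
              mul_le_mul_of_nonneg_left hratio (mul_nonneg (hDpos θstar).le hSpos.le)
          _ = D θstar * M ^ ((1:ℝ)/4) / (vstar ^ ((1:ℝ)/4) * β1c) * S := by ring
      have h4 : 0 ≤ (1 - β1c) * D θstar * (B + S) :=
        mul_nonneg (mul_nonneg hβ1nn (hDpos θstar).le) hBS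
      linarith [hpart1bound k, ht2 k, ht3 θstar]
  · intro x k
    have hu : 1 ≤ 1 / β1c := by rw [le_div_iff₀ hβ1pos]; linarith
    have h4 : G * D x ≤ (1 / β1c + 2 * (1 - β1c)) * D x * (B + S) := by
      have e1 : G * D x ≤ S * D x := mul_le_mul_of_nonneg_right hGS (hDpos x).le
      have e2 : S * D x ≤ (B + S) * D x :=
        mul_le_mul_of_nonneg_right (by linarith) (hDpos x).le
      have e3 : (B + S) * D x ≤ (1 / β1c) * ((B + S) * D x) := by
        nlinarith [mul_nonneg hBS (hDpos x).le]
      have e4 : 0 ≤ 2 * (1 - β1c) * D x * (B + S) :=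
        mul_nonneg (mul_nonneg (by linarith) (hDpos x).le) hBS
      nlinarith
    linarith [hpart2bound x k, ht1nn x, ht2 k, ht3 x]
end

section
/- (Lemma A.4) For Adam, under assumptions (S1)-(S3) and (A1)-(A2), for all k ∈ ℕ and all θ ∈ ℝ^d: E[(θ_k − θ)ᵀ m_k] ≤ D(θ)M^{1/4}/(v_*^{1/4} β_{1k}) · √(σ²/b + G²) + α_k √(β̃_{2k})/(2√(v_*) β_{1k} β̃_{1k}) · (σ²/b + G²) + D(θ) G · β̂_{1k}/β_{1k} + β̂_{1k} D(θ)(B + √(σ²/b + G²)). -/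
open MeasureTheory Filter Real

lemma aux_sq {Ω : Type*} [MeasurableSpace Ω] (μ : Measure Ω) [IsProbabilityMeasure μ]
    {d : ℕ} (θ g : Ω → EuclideanSpace ℝ (Fin d))
    (F : EuclideanSpace ℝ (Fin d) → EuclideanSpace ℝ (Fin d)) (hFc : Continuous F)
    (hθ : Measurable θ) (hg : Measurable g)
    (hub : μ[g | MeasurableSpace.comap θ inferInstance] =ᵐ[μ] fun ω => F (θ ω))
    (G B σ : ℝ)
    (hGbd : ∀ᵐ ω ∂μ, ‖F (θ ω)‖ ≤ G) (hBbd : ∀ᵐ ω ∂μ, ‖g ω‖ ≤ B)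
    (hvar : ∫ ω, ‖g ω - F (θ ω)‖ ^ 2 ∂μ ≤ σ) (hG : 0 ≤ G) :
    ∫ ω, ‖g ω‖ ^ 2 ∂μ ≤ σ + G ^ 2 := by
  have hm : MeasurableSpace.comap θ inferInstance ≤ _ := hθ.comap_le
  have hθm : Measurable[MeasurableSpace.comap θ inferInstance] θ := Measurable.of_comap_le le_rfl
  have hFθ : Measurable (fun ω => F (θ ω)) := (hFc.measurable).comp hθ
  have hFint : Integrable (fun ω => F (θ ω)) μ :=
    Integrable.mono' (integrable_const G) hFθ.aestronglyMeasurable hGbd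
  have hgint : Integrable g μ :=
    Integrable.mono' (integrable_const B) hg.aestronglyMeasurable hBbd
  -- coordinate functions
  have hFi_sm : ∀ i : Fin d, StronglyMeasurable[MeasurableSpace.comap θ inferInstance] (fun ω => F (θ ω) i) := by
    intro i
    exact (((EuclideanSpace.proj (𝕜 := ℝ) i).continuous.comp hFc).measurable.comp hθm).stronglyMeasurable
  have habs : ∀ (x : EuclideanSpace ℝ (Fin d)) (i : Fin d), |x i| ≤ ‖x‖ := by
    intro x i
    rw [EuclideanSpace.norm_eq]
    rw [← Real.sqrt_sq_eq_abs]
    apply Real.sqrt_le_sqrt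
    simp only [Real.norm_eq_abs, sq_abs]
    exact Finset.single_le_sum (f := fun i => (x i)^2) (fun j _ => sq_nonneg _) (Finset.mem_univ i)
  have hFi_int : ∀ i : Fin d, Integrable (fun ω => F (θ ω) i) μ := by
    intro i
    refine Integrable.mono' (integrable_const G) ((hFi_sm i).mono hm).aestronglyMeasurable ?_
    filter_upwards [hGbd] with ω h
    exact (habs _ i).trans h
  have hgi_int : ∀ i : Fin d, Integrable (fun ω => g ω i) μ := by
    intro i
    refine Integrable.mono'  (integrable_const B)
      (((EuclideanSpace.proj (𝕜 := ℝ) i).continuous.measurable.comp hg).aestronglyMeasurable) ?_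
    filter_upwards [hBbd] with ω h
    exact (habs _ i).trans h
  -- coordinate condexp
  have hci : ∀ i : Fin d, (fun ω => F (θ ω) i) =ᵐ[μ] μ[(fun ω => g ω i)|MeasurableSpace.comap θ inferInstance] := by
    intro i
    refine ae_eq_condExp_of_forall_setIntegral_eq hm (hgi_int i)
      (fun s _ _ => (hFi_int i).integrableOn) (fun s hs hμs => ?_)
      (StronglyMeasurable.aestronglyMeasurable (hFi_sm i))
    have hvec : ∫ ω in s, F (θ ω) ∂μ = ∫ ω in s, g ω ∂μ := by
      rw [← setIntegral_condExp hm hgint hs]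
      exact setIntegral_congr_ae (hm s hs)
        ((hub.symm).mono fun ω h _ => h)
    have h1 := (EuclideanSpace.proj (𝕜 := ℝ) i).integral_comp_comm (hFint.restrict (s := s))
    have h2 := (EuclideanSpace.proj (𝕜 := ℝ) i).integral_comp_comm (hgint.restrict (s := s))
    simp only [PiLp.proj_apply] at h1 h2
    rw [h1, h2, hvec]
  -- product integrals
  have hint_prod : ∀ i : Fin d, Integrable (fun ω => F (θ ω) i * g ω i) μ := by
    intro i
    refine Integrable.mono' (integrable_const (G * B))
      (((hFi_sm i).mono hm).aestronglyMeasurable.mul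
        ((EuclideanSpace.proj (𝕜 := ℝ) i).continuous.measurable.comp hg).aestronglyMeasurable) ?_
    filter_upwards [hGbd, hBbd] with ω h1 h2
    rw [norm_mul]
    exact mul_le_mul ((habs _ i).trans h1) ((habs _ i).trans h2) (norm_nonneg _) hG
  have hint_prodF : ∀ i : Fin d, Integrable (fun ω => F (θ ω) i * F (θ ω) i) μ := by
    intro i
    refine Integrable.mono' (integrable_const (G * G))
      (((hFi_sm i).mono hm).aestronglyMeasurable.mul
        ((hFi_sm i).mono hm).aestronglyMeasurable) ?_
    filter_upwards [hGbd] with ω h1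
    rw [norm_mul]
    exact mul_le_mul ((habs _ i).trans h1) ((habs _ i).trans h1) (norm_nonneg _) hG
  have hprod : ∀ i : Fin d, ∫ ω, F (θ ω) i * g ω i ∂μ = ∫ ω, F (θ ω) i * F (θ ω) i ∂μ := by
    intro i
    calc ∫ ω, F (θ ω) i * g ω i ∂μ
        = ∫ ω, (μ[(fun ω => F (θ ω) i * g ω i)|MeasurableSpace.comap θ inferInstance]) ω ∂μ := (integral_condExp hm).symm
      _ = ∫ ω, ((fun ω => F (θ ω) i) * μ[(fun ω => g ω i)|MeasurableSpace.comap θ inferInstance]) ω ∂μ := by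
          refine integral_congr_ae ?_
          exact condExp_mul_of_stronglyMeasurable_left (hFi_sm i) (hint_prod i) (hgi_int i)
      _ = ∫ ω, F (θ ω) i * F (θ ω) i ∂μ := by
          refine integral_congr_ae ?_
          filter_upwards [hci i] with ω h
          simp only [Pi.mul_apply]
          rw [← h]
  -- cross term
  have e1 : ∀ ω, (inner ℝ (F (θ ω)) (g ω) : ℝ) = ∑ i, F (θ ω) i * g ω i := by
    intro ω
    rw [PiLp.inner_apply]
    simp [RCLike.inner_apply]
    exact Finset.sum_congr rfl fun i _ => mul_comm _ _
  have e2 : ∀ ω, (inner ℝ (F (θ ω)) (F (θ ω)) : ℝ) = ∑ i, F (θ ω) i * F (θ ω) i := by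
    intro ω
    rw [PiLp.inner_apply]
    simp [RCLike.inner_apply]
    exact Finset.sum_congr rfl fun i _ => sq _
  have hcross : ∫ ω, (inner ℝ (F (θ ω)) (g ω) : ℝ) ∂μ = ∫ ω, ‖F (θ ω)‖ ^ 2 ∂μ := by
    have e3 : ∫ ω, (inner ℝ (F (θ ω)) (F (θ ω)) : ℝ) ∂μ = ∫ ω, ‖F (θ ω)‖ ^ 2 ∂μ := by
      refine integral_congr_ae (Eventually.of_forall fun ω => ?_)
      exact real_inner_self_eq_norm_sq _
    rw [← e3]
    simp_rw [e1, e2]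
    rw [integral_finset_sum _ (fun i _ => hint_prod i), integral_finset_sum _ (fun i _ => hint_prodF i)]
    exact Finset.sum_congr rfl fun i _ => hprod i
  -- integrability of the various squares
  have hip_int : Integrable (fun ω => (inner ℝ (F (θ ω)) (g ω) : ℝ)) μ := by
    refine Integrable.mono' (integrable_const (G * B)) (hFθ.inner hg).aestronglyMeasurable ?_
    filter_upwards [hGbd, hBbd] with ω h1 h2
    exact (abs_real_inner_le_norm _ _).trans (mul_le_mul h1 h2 (norm_nonneg _) hG)
  have hF2_int : Integrable (fun ω => ‖F (θ ω)‖ ^ 2) μ := by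
    refine Integrable.mono' (integrable_const (G ^ 2)) (hFθ.norm.pow_const 2).aestronglyMeasurable ?_
    filter_upwards [hGbd] with ω h1
    rw [Real.norm_eq_abs, abs_of_nonneg (by positivity)]
    exact pow_le_pow_left₀ (norm_nonneg _) h1 2
  have hsub2_int : Integrable (fun ω => ‖g ω - F (θ ω)‖ ^ 2) μ := by
    refine Integrable.mono' (integrable_const ((B + G) ^ 2))
      (((hg.sub hFθ).norm.pow_const 2).aestronglyMeasurable) ?_
    filter_upwards [hGbd, hBbd] with ω h1 h2
    rw [Real.norm_eq_abs, abs_of_nonneg (by positivity)]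
    refine pow_le_pow_left₀ (norm_nonneg _) ?_ 2
    exact (norm_sub_le _ _).trans (add_le_add h2 h1)
  -- the expansion
  have hexp : ∫ ω, ‖g ω‖ ^ 2 ∂μ
      = ∫ ω, ‖g ω - F (θ ω)‖ ^ 2 ∂μ + 2 * ∫ ω, (inner ℝ (F (θ ω)) (g ω) : ℝ) ∂μ
        - ∫ ω, ‖F (θ ω)‖ ^ 2 ∂μ := by
    have hptw : ∀ ω, ‖g ω‖ ^ 2 = ‖g ω - F (θ ω)‖ ^ 2 + 2 * (inner ℝ (F (θ ω)) (g ω) : ℝ)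
        - ‖F (θ ω)‖ ^ 2 := by
      intro ω
      have h1 := norm_sub_sq_real (g ω) (F (θ ω))
      have h2 : (inner ℝ (g ω) (F (θ ω)) : ℝ) = inner ℝ (F (θ ω)) (g ω) := real_inner_comm _ _
      linarith
    simp_rw [hptw]
    rw [integral_sub (by exact hsub2_int.add (hip_int.const_mul 2)) hF2_int,
      integral_add hsub2_int (hip_int.const_mul 2), integral_const_mul]
  have hF2_le : ∫ ω, ‖F (θ ω)‖ ^ 2 ∂μ ≤ G ^ 2 := by
    have : ∫ ω, ‖F (θ ω)‖ ^ 2 ∂μ ≤ ∫ (_ : Ω), G ^ 2 ∂μ := by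
      refine integral_mono_ae hF2_int (integrable_const _) ?_
      filter_upwards [hGbd] with ω h1
      exact pow_le_pow_left₀ (norm_nonneg _) h1 2
    simpa using this
  rw [hexp, hcross]
  have := hF2_le
  linarith

set_option maxHeartbeats 2000000 in
theorem adam_lemmaA4
    {Ω : Type*} [MeasurableSpace Ω] (μ : Measure Ω) [IsProbabilityMeasure μ]
    {d : ℕ} (f : EuclideanSpace ℝ (Fin d) → ℝ)
    (θ m mp v g dvec : ℕ → Ω → EuclideanSpace ℝ (Fin d))
    (vhat : ℕ → Ω → Fin d → ℝ)
    (α β1 β2 : ℕ → ℝ)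
    (σ2 b G B M vstar : ℝ)
    (D : EuclideanSpace ℝ (Fin d) → ℝ)
    (hf : ContDiff ℝ 1 f)
    (hb : 0 < b) (hσ2 : 0 ≤ σ2) (hG : 0 < G) (hB : 0 < B)
    (hαpos : ∀ k, 0 < α k)
    (hmp0 : ∀ ω, mp 0 ω = 0)
    (hmrec : ∀ k ω, m k ω = β1 k • mp k ω + (1 - β1 k) • g k ω)
    (hmpshift : ∀ k ω, mp (k+1) ω = m k ω)
    (hv0 : ∀ ω (i : Fin d), v 0 ω i = (1 - β2 0) * (g 0 ω i) ^ 2)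
    (hvrec : ∀ k ω (i : Fin d), v (k+1) ω i = β2 (k+1) * v k ω i + (1 - β2 (k+1)) * (g (k+1) ω i) ^ 2)
    (hvhat : ∀ k ω (i : Fin d), vhat k ω i = v k ω i / (1 - (β2 k) ^ (k+1)))
    (hdvec : ∀ k ω (i : Fin d), dvec k ω i = -(m k ω i / (1 - (β1 k) ^ (k+1))) / Real.sqrt (vhat k ω i))
    (hθrec : ∀ k ω, θ (k+1) ω = θ k ω + α k • dvec k ω)
    (hθmeas : ∀ k, Measurable (θ k)) (hgmeas : ∀ k, Measurable (g k))
    (hunbiased : ∀ k, μ[g k | MeasurableSpace.comap (θ k) inferInstance]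
        =ᵐ[μ] fun ω => gradient f (θ k ω))
    (hvar : ∀ k, ∫ ω, ‖g k ω - gradient f (θ k ω)‖ ^ 2 ∂μ ≤ σ2 / b)
    (hGbd : ∀ k, ∀ᵐ ω ∂μ, ‖gradient f (θ k ω)‖ ≤ G)
    (hBbd : ∀ k, ∀ᵐ ω ∂μ, ‖g k ω‖ ≤ B)
    (hDpos : ∀ x, 0 < D x)
    (hDbd : ∀ x k, ∀ᵐ ω ∂μ, ‖θ k ω - x‖ ≤ D x)
    (hM : ∀ k, ∀ᵐ ω ∂μ, ∀ i, (g k ω i) ^ 2 ≤ M)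
    (hvstar : 0 < vstar)
    (hvstarle : ∀ k, ∀ᵐ ω ∂μ, ∀ i, vstar ≤ v k ω i)
    (hβ1mem : ∀ k, β1 k ∈ Set.Ioo (0:ℝ) 1) (hβ2mem : ∀ k, β2 k ∈ Set.Ico (0:ℝ) 1)
    :
    ∀ (k : ℕ) (x : EuclideanSpace ℝ (Fin d)),
      ∫ ω, (inner ℝ (θ k ω - x) (m k ω) : ℝ) ∂μ ≤
        D x * M ^ ((1:ℝ)/4) / (vstar ^ ((1:ℝ)/4) * β1 k) * Real.sqrt (σ2 / b + G ^ 2)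
        + α k * Real.sqrt (1 - (β2 k) ^ (k+1)) / (2 * Real.sqrt vstar * β1 k * (1 - (β1 k) ^ (k+1))) * (σ2 / b + G ^ 2)
        + D x * G * ((1 - β1 k) / β1 k)
        + (1 - β1 k) * D x * (B + Real.sqrt (σ2 / b + G ^ 2)) := by
  intro k x
  have hb' : (0:ℝ) ≤ σ2 / b := div_nonneg hσ2 hb.le
  set C := Real.sqrt (σ2 / b + G ^ 2) with hCdef
  have hCpos : 0 < C := Real.sqrt_pos.2 (by positivity)
  have hCsq : C ^ 2 = σ2 / b + G ^ 2 := Real.sq_sqrt (by positivity)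
  have hgradc : Continuous (gradient f) := by
    have h1 : Continuous (fderiv ℝ f) := hf.continuous_fderiv one_ne_zero
    have h2 : gradient f = fun y => (InnerProductSpace.toDual ℝ (EuclideanSpace ℝ (Fin d))).symm
        (fderiv ℝ f y) := rfl
    rw [h2]
    exact (InnerProductSpace.toDual ℝ (EuclideanSpace ℝ (Fin d))).symm.continuous.comp h1
  have hEg2 : ∀ j, ∫ ω, ‖g j ω‖ ^ 2 ∂μ ≤ σ2 / b + G ^ 2 := fun j =>
    aux_sq μ (θ j) (g j) (gradient f) hgradc (hθmeas j) (hgmeas j) (hunbiased j) G B (σ2 / b)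
      (hGbd j) (hBbd j) (hvar j) hG.le
  have hgint : ∀ j, Integrable (g j) μ := fun j =>
    Integrable.mono' (integrable_const B) (hgmeas j).aestronglyMeasurable (hBbd j)
  have hgn_int : ∀ j, Integrable (fun ω => ‖g j ω‖) μ := fun j => (hgint j).norm
  have hEg1 : ∀ j, ∫ ω, ‖g j ω‖ ∂μ ≤ C := by
    intro j
    have hgn2_int : Integrable (fun ω => ‖g j ω‖ ^ 2) μ := by
      refine Integrable.mono' (integrable_const (B ^ 2))
        ((hgmeas j).norm.pow_const 2).aestronglyMeasurable ?_
      filter_upwards [hBbd j] with ω h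
      rw [Real.norm_eq_abs, abs_of_nonneg (by positivity)]
      exact pow_le_pow_left₀ (norm_nonneg _) h 2
    have key : 2 * C * ∫ ω, ‖g j ω‖ ∂μ ≤ ∫ ω, (‖g j ω‖ ^ 2 + C ^ 2) ∂μ := by
      rw [← integral_const_mul]
      refine integral_mono_ae ((hgn_int j).const_mul _) (hgn2_int.add (integrable_const _)) ?_
      refine Eventually.of_forall fun ω => ?_
      have h : 2 * C * ‖g j ω‖ ≤ ‖g j ω‖ ^ 2 + C ^ 2 := by nlinarith [sq_nonneg (‖g j ω‖ - C)]
      exact h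
    rw [integral_add hgn2_int (integrable_const _), integral_const] at key
    simp only [probReal_univ, one_smul] at key
    have hintnn : 0 ≤ ∫ ω, ‖g j ω‖ ∂μ := integral_nonneg fun ω => norm_nonneg _
    nlinarith [hEg2 j, key, hCpos]
  -- measurability and bounds for m
  have hmmeas : ∀ j, Measurable (m j) := by
    intro j
    induction j with
    | zero =>
      have h : m 0 = fun ω => β1 0 • mp 0 ω + (1 - β1 0) • g 0 ω := funext (hmrec 0)
      rw [h]
      simp only [hmp0, smul_zero, zero_add]
      exact (hgmeas 0).const_smul (1 - β1 0)
    | succ n ih =>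
      have h : m (n+1) = fun ω => β1 (n+1) • m n ω + (1 - β1 (n+1)) • g (n+1) ω := by
        funext ω; rw [hmrec, hmpshift]
      rw [h]
      exact (ih.const_smul (β1 (n+1))).add ((hgmeas (n+1)).const_smul (1 - β1 (n+1)))
  have hmbd : ∀ j, ∀ᵐ ω ∂μ, ‖m j ω‖ ≤ B := by
    intro j
    induction j with
    | zero =>
      filter_upwards [hBbd 0] with ω h
      rw [hmrec 0 ω, hmp0, smul_zero, zero_add, norm_smul, Real.norm_eq_abs,
        abs_of_nonneg (by linarith [(hβ1mem 0).2])]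
      nlinarith [(hβ1mem 0).1, (hβ1mem 0).2, norm_nonneg (g 0 ω), hB]
    | succ n ih =>
      filter_upwards [ih, hBbd (n+1)] with ω h1 h2
      rw [hmrec (n+1) ω, hmpshift n ω]
      calc ‖β1 (n+1) • m n ω + (1 - β1 (n+1)) • g (n+1) ω‖
          ≤ ‖β1 (n+1) • m n ω‖ + ‖(1 - β1 (n+1)) • g (n+1) ω‖ := norm_add_le _ _
        _ = β1 (n+1) * ‖m n ω‖ + (1 - β1 (n+1)) * ‖g (n+1) ω‖ := by
            rw [norm_smul, norm_smul, Real.norm_eq_abs, Real.norm_eq_abs,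
              abs_of_nonneg (hβ1mem (n+1)).1.le, abs_of_nonneg (by linarith [(hβ1mem (n+1)).2])]
        _ ≤ B := by nlinarith [(hβ1mem (n+1)).1, (hβ1mem (n+1)).2, norm_nonneg (m n ω),
              norm_nonneg (g (n+1) ω)]
  have hmint : ∀ j, Integrable (m j) μ := fun j =>
    Integrable.mono' (integrable_const B) (hmmeas j).aestronglyMeasurable (hmbd j)
  have hmn_int : ∀ j, Integrable (fun ω => ‖m j ω‖) μ := fun j => (hmint j).norm
  have hEm : ∀ j, ∫ ω, ‖m j ω‖ ∂μ ≤ C := by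
    intro j
    induction j with
    | zero =>
      have hptw : ∀ᵐ ω ∂μ, ‖m 0 ω‖ ≤ (1 - β1 0) * ‖g 0 ω‖ := by
        refine Eventually.of_forall fun ω => ?_
        rw [hmrec 0 ω, hmp0, smul_zero, zero_add, norm_smul, Real.norm_eq_abs,
          abs_of_nonneg (by linarith [(hβ1mem 0).2])]
      calc ∫ ω, ‖m 0 ω‖ ∂μ ≤ ∫ ω, (1 - β1 0) * ‖g 0 ω‖ ∂μ :=
            integral_mono_ae (hmn_int 0) ((hgn_int 0).const_mul _) hptw
        _ = (1 - β1 0) * ∫ ω, ‖g 0 ω‖ ∂μ := integral_const_mul _ _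
        _ ≤ C := by
            have h1 := hEg1 0
            have h2 : 0 ≤ ∫ ω, ‖g 0 ω‖ ∂μ := integral_nonneg fun ω => norm_nonneg _
            nlinarith [(hβ1mem 0).1, (hβ1mem 0).2, hCpos]
    | succ n ih =>
      have hptw : ∀ᵐ ω ∂μ, ‖m (n+1) ω‖ ≤ β1 (n+1) * ‖m n ω‖ + (1 - β1 (n+1)) * ‖g (n+1) ω‖ := by
        refine Eventually.of_forall fun ω => ?_
        rw [hmrec (n+1) ω, hmpshift n ω]
        calc ‖β1 (n+1) • m n ω + (1 - β1 (n+1)) • g (n+1) ω‖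
            ≤ ‖β1 (n+1) • m n ω‖ + ‖(1 - β1 (n+1)) • g (n+1) ω‖ := norm_add_le _ _
          _ = β1 (n+1) * ‖m n ω‖ + (1 - β1 (n+1)) * ‖g (n+1) ω‖ := by
              rw [norm_smul, norm_smul, Real.norm_eq_abs, Real.norm_eq_abs,
                abs_of_nonneg (hβ1mem (n+1)).1.le, abs_of_nonneg (by linarith [(hβ1mem (n+1)).2])]
      calc ∫ ω, ‖m (n+1) ω‖ ∂μ
          ≤ ∫ ω, (β1 (n+1) * ‖m n ω‖ + (1 - β1 (n+1)) * ‖g (n+1) ω‖) ∂μ :=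
            integral_mono_ae (hmn_int (n+1))
              (((hmn_int n).const_mul _).add ((hgn_int (n+1)).const_mul _)) hptw
        _ = β1 (n+1) * ∫ ω, ‖m n ω‖ ∂μ + (1 - β1 (n+1)) * ∫ ω, ‖g (n+1) ω‖ ∂μ := by
            rw [integral_add ((hmn_int n).const_mul _) ((hgn_int (n+1)).const_mul _),
              integral_const_mul, integral_const_mul]
        _ ≤ C := by
            have h1 := hEg1 (n+1)
            nlinarith [(hβ1mem (n+1)).1, (hβ1mem (n+1)).2]
  -- bound on LHS
  have hθx : Measurable (fun ω => θ k ω - x) := (hθmeas k).sub measurable_const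
  have hipm : Measurable (fun ω => (inner ℝ (θ k ω - x) (m k ω) : ℝ)) := hθx.inner (hmmeas k)
  have hip_int : Integrable (fun ω => (inner ℝ (θ k ω - x) (m k ω) : ℝ)) μ := by
    refine Integrable.mono' (integrable_const (D x * B)) hipm.aestronglyMeasurable ?_
    filter_upwards [hDbd x k, hmbd k] with ω h1 h2
    exact (abs_real_inner_le_norm _ _).trans (mul_le_mul h1 h2 (norm_nonneg _) (hDpos x).le)
  have hmain : ∫ ω, (inner ℝ (θ k ω - x) (m k ω) : ℝ) ∂μ ≤ D x * C := by
    calc ∫ ω, (inner ℝ (θ k ω - x) (m k ω) : ℝ) ∂μ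
        ≤ ∫ ω, D x * ‖m k ω‖ ∂μ := by
          refine integral_mono_ae hip_int ((hmn_int k).const_mul _) ?_
          filter_upwards [hDbd x k] with ω h1
          exact (real_inner_le_norm _ _).trans
            (mul_le_mul h1 le_rfl (norm_nonneg _) (hDpos x).le)
      _ = D x * ∫ ω, ‖m k ω‖ ∂μ := integral_const_mul _ _
      _ ≤ D x * C := mul_le_mul_of_nonneg_left (hEm k) (hDpos x).le
  -- nonnegativity of RHS pieces
  have hβ1 := hβ1mem k
  have hβ1pow : (β1 k) ^ (k+1) < 1 := pow_lt_one₀ hβ1.1.le hβ1.2 (Nat.succ_ne_zero k)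
  have hM4 : 0 ≤ M ^ ((1:ℝ)/4) := by
    rcases le_or_gt 0 M with h | h
    · exact Real.rpow_nonneg h _
    · rw [Real.rpow_def_of_neg h]
      have hcos : 0 < Real.cos ((1:ℝ)/4 * π) :=
        Real.cos_pos_of_mem_Ioo ⟨by nlinarith [Real.pi_pos], by nlinarith [Real.pi_pos]⟩
      exact (mul_pos (Real.exp_pos _) hcos).le
  have hv4 : 0 < vstar ^ ((1:ℝ)/4) := Real.rpow_pos_of_pos hvstar _
  have hT2 : 0 ≤ α k * Real.sqrt (1 - (β2 k) ^ (k+1)) /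
      (2 * Real.sqrt vstar * β1 k * (1 - (β1 k) ^ (k+1))) * (σ2 / b + G ^ 2) := by
    refine mul_nonneg (div_nonneg (mul_nonneg (hαpos k).le (Real.sqrt_nonneg _)) ?_) (by positivity)
    refine mul_nonneg (mul_nonneg (mul_nonneg (by norm_num) (Real.sqrt_nonneg vstar)) hβ1.1.le)
      (by linarith [hβ1pow])
  have hT3 : 0 ≤ D x * G * ((1 - β1 k) / β1 k) :=
    mul_nonneg (mul_nonneg (hDpos x).le hG.le) (div_nonneg (by linarith [hβ1.2]) hβ1.1.le)
  have hT4 : 0 ≤ (1 - β1 k) * D x * (B + C) :=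
    mul_nonneg (mul_nonneg (by linarith [hβ1.2]) (hDpos x).le) (by nlinarith [hCpos])
  rcases Nat.eq_zero_or_pos d with hd | hd
  · -- dimension zero: integrand is zero
    haveI : IsEmpty (Fin d) := by rw [hd]; infer_instance
    have h0 : ∀ ω, (inner ℝ (θ k ω - x) (m k ω) : ℝ) = 0 := by
      intro ω
      rw [PiLp.inner_apply, Finset.univ_eq_empty, Finset.sum_empty]
    have hzero : ∫ ω, (inner ℝ (θ k ω - x) (m k ω) : ℝ) ∂μ = 0 := by
      simp_rw [h0]; exact integral_zero _ _
    rw [hzero]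
    have hT1 : 0 ≤ D x * M ^ ((1:ℝ)/4) / (vstar ^ ((1:ℝ)/4) * β1 k) * C :=
      mul_nonneg (div_nonneg (mul_nonneg (hDpos x).le hM4)
        (mul_nonneg hv4.le hβ1.1.le)) hCpos.le
    linarith
  · -- positive dimension: vstar ≤ M
    have hMv : vstar ≤ M := by
      haveI : (ae μ).NeBot := MeasureTheory.IsProbabilityMeasure.ae_neBot (μ := μ)
      obtain ⟨ω, h1, h2⟩ := ((hM 0).and (hvstarle 0)).exists
      have hi : (⟨0, hd⟩ : Fin d) = ⟨0, hd⟩ := rfl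
      have hv := h2 ⟨0, hd⟩
      rw [hv0 ω ⟨0, hd⟩] at hv
      have hg2 := h1 (⟨0, hd⟩ : Fin d)
      nlinarith [(hβ2mem 0).1, (hβ2mem 0).2, sq_nonneg (g 0 ω ⟨0, hd⟩)]
    have hq : vstar ^ ((1:ℝ)/4) * β1 k ≤ M ^ ((1:ℝ)/4) := by
      have h1 : vstar ^ ((1:ℝ)/4) ≤ M ^ ((1:ℝ)/4) :=
        Real.rpow_le_rpow hvstar.le hMv (by norm_num)
      nlinarith [hβ1.1, hβ1.2, hv4]
    have hT1 : D x * C ≤ D x * M ^ ((1:ℝ)/4) / (vstar ^ ((1:ℝ)/4) * β1 k) * C := by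
      refine mul_le_mul_of_nonneg_right ?_ hCpos.le
      rw [le_div_iff₀ (mul_pos hv4 hβ1.1)]
      exact mul_le_mul_of_nonneg_left hq (hDpos x).le
    linarith
end
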